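/- arXiv:1108.3671 — 2 statements merged into one kernel-verified Lean document; each statement's English description precedes it below -/
import Mathlib

section
/- Let (a_i)_{0≤i≤d} be a sequence with each a_i ∈ {1,-1} and (b_i)_{0≤i≤d} integers with appropriate nonvanishing so that all k_i ≠ 0. Define n_0 = 2b_0 if a_0 = 1 and n_0 = 2b_0 − 1 if a_0 = −1; for 1 ≤ i ≤ d define n_i = k_i where k_i = 2b_i + 1 if a_i = a_{i-1} = 1, k_i = 2b_i if a_i ≠ a_{i-1}, and k_i = 2b_i − 1 if a_i = a_{i-1} = −1. Set ε(j) = (-1)^{1+n_j} and a(r) = ε(0)⋯ε(r-1). Then a(r) = −a_{r-1} for all 1 ≤ r ≤ d. -/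
/-- Key induction for 2-bridge knots: with `n`, `k`, `ε`, and the partial
products `aa` defined from the 2-bridge data `(a_i)`, `(b_i)`, we have
`aa r = -a (r-1)` for `1 ≤ r ≤ d`. -/
theorem two_bridge_sign_induction
    (d : ℕ) (a b k n : ℕ → ℤ)
    (ha : ∀ i, i ≤ d → a i = 1 ∨ a i = -1)
    (hk1 : ∀ i, 1 ≤ i → i ≤ d → a i = 1 → a (i - 1) = 1 → k i = 2 * b i + 1)
    (hk2 : ∀ i, 1 ≤ i → i ≤ d → a i ≠ a (i - 1) → k i = 2 * b i)
    (hk3 : ∀ i, 1 ≤ i → i ≤ d → a i = -1 → a (i - 1) = -1 → k i = 2 * b i - 1)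
    (hkne : ∀ i, 1 ≤ i → i ≤ d → k i ≠ 0)
    (hn0 : n 0 = if a 0 = 1 then 2 * b 0 else 2 * b 0 - 1)
    (hn0ne : n 0 ≠ 0)
    (hn : ∀ i, 1 ≤ i → i ≤ d → n i = k i)
    (ε : ℕ → ℤ) (hε : ∀ j, ε j = (-1 : ℤ) ^ (1 + n j).natAbs)
    (aa : ℕ → ℤ) (haa : ∀ r, aa r = ∏ j ∈ Finset.range r, ε j) :
    ∀ r, 1 ≤ r → r ≤ d → aa r = -(a (r - 1)) := by
  -- helper parity facts
  have hpow_even : ∀ m : ℤ, Even m → (-1 : ℤ) ^ m.natAbs = 1 := by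
    intro m hm
    exact Even.neg_one_pow (Int.natAbs_even.mpr hm)
  have hpow_odd : ∀ m : ℤ, Odd m → (-1 : ℤ) ^ m.natAbs = -1 := by
    intro m hm
    exact Odd.neg_one_pow (Int.natAbs_odd.mpr hm)
  -- ε 0 = -(a 0)
  have hd0 : 0 ≤ d := Nat.zero_le d
  have hε0 : ε 0 = -(a 0) := by
    rcases ha 0 hd0 with h0 | h0
    · rw [hε 0, hn0, if_pos h0, hpow_odd _ ⟨b 0, by ring⟩, h0]
    · rw [hε 0, hn0, if_neg (by rw [h0]; norm_num), hpow_even _ ⟨b 0, by ring⟩, h0]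
      norm_num
  -- ε at step r ≥ 1
  have hεstep : ∀ r, 1 ≤ r → r ≤ d → ε r = a r * a (r - 1) := by
    intro r h1 h2
    rcases ha r h2 with hr | hr <;> rcases ha (r - 1) (le_trans (Nat.sub_le r 1) h2) with hr1 | hr1
    · rw [hε r, hn r h1 h2, hk1 r h1 h2 hr hr1, hr, hr1,
        hpow_even _ ⟨b r + 1, by ring⟩]; ring
    · rw [hε r, hn r h1 h2, hk2 r h1 h2 (by rw [hr, hr1]; norm_num), hr, hr1,
        hpow_odd _ ⟨b r, by ring⟩]; ring
    · rw [hε r, hn r h1 h2, hk2 r h1 h2 (by rw [hr, hr1]; norm_num), hr, hr1,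
        hpow_odd _ ⟨b r, by ring⟩]; ring
    · rw [hε r, hn r h1 h2, hk3 r h1 h2 hr hr1, hr, hr1,
        hpow_even _ ⟨b r, by ring⟩]; ring
  intro r
  induction r with
  | zero => intro h; omega
  | succ m ih =>
    intro _ hle
    rcases Nat.eq_zero_or_pos m with hm | hm
    · subst hm
      rw [haa 1, Finset.prod_range_one, hε0]
    · have hmd : m ≤ d := Nat.le_of_succ_le hle
      have IH := ih hm hmd
      have : aa (m + 1) = aa m * ε m := by
        rw [haa (m + 1), haa m, Finset.prod_range_succ]
      rw [this, IH, hεstep m hm hmd, Nat.add_sub_cancel]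
      rcases ha (m - 1) (le_trans (Nat.sub_le m 1) hmd) with h | h <;> rw [h] <;> ring
end

section
/- With the hypotheses of the previous statement (n_i chosen from the 2-bridge data), the slope of the r-th iterate, 2·a(r) + 1/n_r, equals the 2-bridge slope invariant m_r = −2a_{r-1} + 1/k_r, for all 1 ≤ r ≤ d. -/
/-- With the `n_i` chosen from the 2-bridge data, the slope of the `r`-th
iterate, `2 aa(r) + 1/n_r`, equals the 2-bridge slope invariant
`m_r = -2 a_{r-1} + 1/k_r`, for `1 ≤ r ≤ d`. -/
theorem two_bridge_slope_match
    (d : ℕ) (a b k n : ℕ → ℤ)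
    (ha : ∀ i, i ≤ d → a i = 1 ∨ a i = -1)
    (hk1 : ∀ i, 1 ≤ i → i ≤ d → a i = 1 → a (i - 1) = 1 → k i = 2 * b i + 1)
    (hk2 : ∀ i, 1 ≤ i → i ≤ d → a i ≠ a (i - 1) → k i = 2 * b i)
    (hk3 : ∀ i, 1 ≤ i → i ≤ d → a i = -1 → a (i - 1) = -1 → k i = 2 * b i - 1)
    (hkne : ∀ i, 1 ≤ i → i ≤ d → k i ≠ 0)
    (hn0 : n 0 = if a 0 = 1 then 2 * b 0 else 2 * b 0 - 1)
    (hn0ne : n 0 ≠ 0)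
    (hn : ∀ i, 1 ≤ i → i ≤ d → n i = k i)
    (ε : ℕ → ℤ) (hε : ∀ j, ε j = (-1 : ℤ) ^ (1 + n j).natAbs)
    (aa : ℕ → ℤ) (haa : ∀ r, aa r = ∏ j ∈ Finset.range r, ε j) :
    ∀ r, 1 ≤ r → r ≤ d →
      (2 * (aa r) : ℚ) + 1 / (n r : ℚ) = -2 * (a (r - 1) : ℚ) + 1 / (k r : ℚ) := by
  -- parity helper
  have hpow : ∀ m : ℤ, (-1 : ℤ) ^ (1 + m).natAbs = if Even m then -1 else 1 := by
    intro m
    by_cases h : Even m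
    · have : Odd (1 + m).natAbs := by
        simpa [Int.natAbs_odd, add_comm] using h.add_one
      simp [h, this.neg_one_pow]
    · have : Even (1 + m).natAbs := by
        rw [Int.natAbs_even, add_comm, Int.even_add_one]
        simpa using h
      simp [h, this.neg_one_pow]
  -- ε r = -a (r-1) · a r relationship, via key induction
  have key : ∀ r, 1 ≤ r → r ≤ d → aa r = -a (r - 1) := by
    intro r
    induction r with
    | zero => intro h; omega
    | succ r ih =>
      intro _ hrd
      rcases Nat.eq_zero_or_pos r with rfl | hr
      · -- base case: aa 1 = ε 0 = -a 0
        have h0 : aa 1 = ε 0 := by simp [haa]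
        rw [h0, hε 0, hpow]
        rcases ha 0 (by omega) with h | h
        · simp [hn0, h, parity_simps]
        · have : ¬ Even (n 0) := by
            rw [hn0]
            simp [h, parity_simps]
          simp [this, h]
      · -- step
        have hrd' : r ≤ d := by omega
        have haar : aa r = -a (r - 1) := ih hr hrd'
        have hstep : aa (r + 1) = aa r * ε r := by
          simp [haa, Finset.prod_range_succ]
        have hnr : n r = k r := hn r hr hrd'
        have hsub : r + 1 - 1 = r := rfl
        rw [hsub, hstep, haar, hε r, hpow, hnr]
        rcases ha r hrd' with h1 | h1 <;> rcases ha (r - 1) (by omega) with h2 | h2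
        · have hkk := hk1 r hr hrd' h1 h2
          have : ¬ Even (k r) := by rw [hkk]; simp [parity_simps]
          simp [this, h1, h2]
        · have hkk := hk2 r hr hrd' (by rw [h1, h2]; norm_num)
          have : Even (k r) := by rw [hkk]; exact even_two_mul _
          simp [this, h1, h2]
        · have hkk := hk2 r hr hrd' (by rw [h1, h2]; norm_num)
          have : Even (k r) := by rw [hkk]; exact even_two_mul _
          simp [this, h1, h2]
        · have hkk := hk3 r hr hrd' h1 h2
          have : ¬ Even (k r) := by rw [hkk]; simp [parity_simps]
          simp [this, h1, h2]
  intro r hr hrd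
  rw [key r hr hrd, hn r hr hrd]
  push_cast
  ring
end
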